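/- Let X = (I,P) be a probabilistic coherence space and let t : Mfin(I) → [0,∞) satisfy Fun t(x) := Σ_μ t_μ x^μ ≤ 1 for all x ∈ P. Let p ∈ [0,1) and let x,y ∈ P with x ≤ y pointwise and ‖y‖_X ≤ p. Then 0 ≤ Fun t(y) − Fun t(x) ≤ ‖y−x‖_X / (1−p). -/

import Mathlib

open scoped ENNReal NNReal

noncomputable section

/-- ⟨u,u'⟩ = Σ_i u_i u'_i in [0,∞]. -/
def dotE {I : Type*} (u v : I → ℝ≥0∞) : ℝ≥0∞ := ∑' i, u i * v i

/-- The orthogonal P⊥ of a set P ⊆ [0,∞]^I. -/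
def orthE {I : Type*} (P : Set (I → ℝ≥0∞)) : Set (I → ℝ≥0∞) :=
  {v | ∀ u ∈ P, dotE u v ≤ 1}

/-- (I,P) is a probabilistic coherence space. -/
structure IsPCS {I : Type*} (P : Set (I → ℝ≥0∞)) : Prop where
  biorth : orthE (orthE P) = P
  nonzero : ∀ a, ∃ x ∈ P, 0 < x a
  bounded : ∀ a, ∃ m : ℝ≥0, ∀ x ∈ P, x a ≤ (m : ℝ≥0∞)

/-- The norm ‖x‖_X = inf{r > 0 | x ∈ rP}. -/
def pnorm {I : Type*} (P : Set (I → ℝ≥0∞)) (x : I → ℝ≥0∞) : ℝ≥0∞ :=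
  sInf {r : ℝ≥0∞ | 0 < r ∧ ∃ z ∈ P, x = r • z}

/-- x^μ = Π_{a∈I} x_a^{μ(a)}. -/
def mpow {I : Type*} (x : I → ℝ≥0∞) (μ : Multiset I) : ℝ≥0∞ := (μ.map x).prod

lemma mpow_cons {I : Type*} (x : I → ℝ≥0∞) (a : I) (μ : Multiset I) :
    mpow x (a ::ₘ μ) = x a * mpow x μ := by
  simp [mpow]

lemma mpow_mono {I : Type*} {x y : I → ℝ≥0∞} (h : ∀ i, x i ≤ y i) (μ : Multiset I) :
    mpow x μ ≤ mpow y μ := by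
  induction μ using Multiset.induction with
  | empty => simp [mpow]
  | cons a μ ih => rw [mpow_cons, mpow_cons]; exact mul_le_mul' (h a) ih

lemma dotE_comm {I : Type*} (u v : I → ℝ≥0∞) : dotE u v = dotE v u :=
  tsum_congr fun i => mul_comm _ _

/-- key convexity inequality for monomials along a ray. -/
lemma mpow_key {I : Type*} (x u : I → ℝ≥0∞) (c : ℝ≥0∞) (μ : Multiset I) :
    (1 + c) * mpow (fun i => x i + u i) μ ≤
      mpow (fun i => x i + (1 + c) * u i) μ + c * mpow x μ := by
  induction μ using Multiset.induction with
  | empty => simp [mpow, add_comm]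
  | cons a μ ih =>
    rw [mpow_cons, mpow_cons, mpow_cons]
    have hmono : mpow (fun i => x i + u i) μ ≤ mpow (fun i => x i + (1 + c) * u i) μ :=
      mpow_mono (fun i => by
        have : u i ≤ (1 + c) * u i := le_mul_of_one_le_left zero_le le_self_add
        exact add_le_add_right this _) μ
    calc (1 + c) * ((x a + u a) * mpow (fun i => x i + u i) μ)
        = x a * ((1 + c) * mpow (fun i => x i + u i) μ)
          + u a * ((1 + c) * mpow (fun i => x i + u i) μ) := by ring
      _ ≤ x a * (mpow (fun i => x i + (1 + c) * u i) μ + c * mpow x μ)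
          + u a * ((1 + c) * mpow (fun i => x i + (1 + c) * u i) μ) := by
            gcongr
      _ = (x a + (1 + c) * u a) * mpow (fun i => x i + (1 + c) * u i) μ
          + c * (x a * mpow x μ) := by ring

/-- P is downward closed. -/
lemma pcs_down {I : Type*} {P : Set (I → ℝ≥0∞)} (hP : IsPCS P)
    {u v : I → ℝ≥0∞} (hu : u ∈ P) (hv : ∀ i, v i ≤ u i) : v ∈ P := by
  rw [← hP.biorth]
  intro w hw
  have h1 : dotE w u ≤ 1 := by
    rw [← hP.biorth] at hu
    exact hu w hw
  refine le_trans ?_ h1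
  exact ENNReal.tsum_le_tsum fun i => mul_le_mul' le_rfl (hv i)

/-- P is convex. -/
lemma pcs_convex {I : Type*} {P : Set (I → ℝ≥0∞)} (hP : IsPCS P)
    {z w : I → ℝ≥0∞} (hz : z ∈ P) (hw : w ∈ P) {s : ℝ≥0∞} (hs : s ≤ 1) :
    (fun i => s * z i + (1 - s) * w i) ∈ P := by
  rw [← hP.biorth]
  intro v hv
  have hv' : ∀ f ∈ P, dotE v f ≤ 1 := fun f hf => (dotE_comm v f) ▸ hv f hf
  have key : dotE v (fun i => s * z i + (1 - s) * w i)
      = s * dotE v z + (1 - s) * dotE v w := by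
    unfold dotE
    rw [← ENNReal.tsum_mul_left, ← ENNReal.tsum_mul_left, ← ENNReal.tsum_add]
    exact tsum_congr fun i => by ring
  rw [key]
  calc s * dotE v z + (1 - s) * dotE v w ≤ s * 1 + (1 - s) * 1 := by
        gcongr
        · exact hv' z hz
        · exact hv' w hw
    _ = 1 := by rw [mul_one, mul_one, add_tsub_cancel_of_le hs]

/-- For t : !X ⊸ 1, p ∈ [0,1), x ≤ y in P with ‖y‖_X ≤ p:
0 ≤ Fun t(y) − Fun t(x) ≤ ‖y−x‖_X/(1−p). -/
theorem stmt11 {I : Type*} [Countable I]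
    (P : Set (I → ℝ≥0∞)) (hP : IsPCS P)
    (t : Multiset I → ℝ≥0∞) (htfin : ∀ μ, t μ ≠ ⊤)
    (ht : ∀ z ∈ P, ∑' μ : Multiset I, t μ * mpow z μ ≤ 1)
    (p : ℝ≥0∞) (hp : p < 1)
    (x y : I → ℝ≥0∞) (hx : x ∈ P) (hy : y ∈ P) (hxy : x ≤ y)
    (hyp : pnorm P y ≤ p) :
    (∑' μ : Multiset I, t μ * mpow x μ) ≤ (∑' μ : Multiset I, t μ * mpow y μ) ∧
    (∑' μ : Multiset I, t μ * mpow y μ) - (∑' μ : Multiset I, t μ * mpow x μ) ≤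
      pnorm P (y - x) / (1 - p) := by

  set A := ∑' μ : Multiset I, t μ * mpow x μ with hA
  set B := ∑' μ : Multiset I, t μ * mpow y μ with hB
  have hAB : A ≤ B :=
    ENNReal.tsum_le_tsum fun μ => mul_le_mul' le_rfl (mpow_mono (fun i => hxy i) μ)
  refine ⟨hAB, ?_⟩
  have hB1 : B ≤ 1 := ht y hy
  have hA1 : A ≤ 1 := hAB.trans hB1
  set u : I → ℝ≥0∞ := y - x with hu
  have hxyu : ∀ i, x i + u i = y i := fun i => add_tsub_cancel_of_le (hxy i)
  have h1p0 : (1 : ℝ≥0∞) - p ≠ 0 := by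
    simp [tsub_eq_zero_iff_le, not_le, hp]
  have h1pt : (1 : ℝ≥0∞) - p ≠ ⊤ := by
    exact ne_top_of_le_ne_top ENNReal.one_ne_top tsub_le_self
  rw [ENNReal.le_div_iff_mul_le (Or.inl h1p0) (Or.inl h1pt)]
  apply ENNReal.le_of_forall_pos_le_add
  intro ε hε _
  set q := pnorm P u with hq
  -- the core claim, for any admissible scaling s of y with s < 1
  have core : ∀ s : ℝ≥0∞, s ∈ {r : ℝ≥0∞ | 0 < r ∧ ∃ z ∈ P, y = r • z} → s < 1 →
      (B - A) * (1 - s) ≤ q := by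
    rintro s ⟨-, z, hzP, hyz⟩ hs1
    apply le_sInf
    rintro r ⟨hr0, w, hwP, huw⟩
    rcases eq_or_ne r ⊤ with rfl | hrt
    · exact le_top
    set c : ℝ≥0∞ := (1 - s) / r with hc
    have hct : c ≠ ⊤ := by
      exact (ENNReal.div_lt_top (ne_top_of_le_ne_top ENNReal.one_ne_top tsub_le_self) hr0.ne').ne
    have hcr : c * r = 1 - s := ENNReal.div_mul_cancel hr0.ne' hrt
    -- x + (1+c)u is a convex combination s z + (1-s) w
    have hcomb : (fun i => x i + (1 + c) * u i) = (fun i => s * z i + (1 - s) * w i) := by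
      funext i
      have hui : u i = r * w i := by
        have := congrFun huw i
        simpa [Pi.smul_apply, smul_eq_mul] using this
      have hyi : y i = s * z i := by
        have := congrFun hyz i
        simpa [Pi.smul_apply, smul_eq_mul] using this
      calc x i + (1 + c) * u i = (x i + u i) + (c * r) * w i := by rw [hui]; ring
        _ = s * z i + (1 - s) * w i := by rw [hxyu i, hcr, hyi]
  -- sum of the key inequality
    set C := ∑' μ : Multiset I, t μ * mpow (fun i => x i + (1 + c) * u i) μ with hC
    have hC1 : C ≤ 1 := by
      rw [hC, hcomb]
      exact ht _ (pcs_convex hP hzP hwP hs1.le)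
    have hsum : (1 + c) * B ≤ C + c * A := by
      have hyB : B = ∑' μ : Multiset I, t μ * mpow (fun i => x i + u i) μ := by
        rw [hB]
        congr 1
        funext μ
        congr 1
        exact congrArg (mpow · μ) (funext fun i => (hxyu i).symm)
      calc (1 + c) * B = ∑' μ : Multiset I, (1 + c) * (t μ * mpow (fun i => x i + u i) μ) := by
            rw [ENNReal.tsum_mul_left, ← hyB]
        _ ≤ ∑' μ : Multiset I,
              (t μ * mpow (fun i => x i + (1 + c) * u i) μ + c * (t μ * mpow x μ)) := by
            apply ENNReal.tsum_le_tsum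
            intro μ
            calc (1 + c) * (t μ * mpow (fun i => x i + u i) μ)
                = t μ * ((1 + c) * mpow (fun i => x i + u i) μ) := by ring
              _ ≤ t μ * (mpow (fun i => x i + (1 + c) * u i) μ + c * mpow x μ) :=
                  mul_le_mul' le_rfl (mpow_key x u c μ)
              _ = t μ * mpow (fun i => x i + (1 + c) * u i) μ + c * (t μ * mpow x μ) := by ring
        _ = C + c * A := by rw [ENNReal.tsum_add, ENNReal.tsum_mul_left]
    have hcBA : c * (B - A) ≤ 1 := by
      have hcA : c * A ≠ ⊤ :=
        ENNReal.mul_ne_top hct (ne_top_of_le_ne_top ENNReal.one_ne_top hA1)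
      rw [← ENNReal.add_le_add_iff_right hcA]
      calc c * (B - A) + c * A = c * ((B - A) + A) := by ring
        _ = c * B := by rw [tsub_add_cancel_of_le hAB]
        _ ≤ (1 + c) * B := mul_le_mul' le_add_self le_rfl
        _ ≤ C + c * A := hsum
        _ ≤ 1 + c * A := by gcongr
    calc (B - A) * (1 - s) = (c * (B - A)) * r := by rw [← hcr]; ring
      _ ≤ 1 * r := mul_le_mul' hcBA le_rfl
      _ = r := one_mul r
  -- pick s close to p
  set δ : ℝ≥0∞ := min (↑ε) ((1 - p) / 2) with hδ
  have hδ0 : 0 < δ := by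
    apply lt_min
    · exact_mod_cast hε
    · exact ENNReal.div_pos h1p0 (by norm_num)
  have hpδ1 : p + δ < 1 := by
    calc p + δ ≤ p + (1 - p) / 2 := add_le_add_right (min_le_right _ _) p
      _ < p + (1 - p) := by
          apply ENNReal.add_lt_add_left (hp.trans_le le_top).ne
          exact ENNReal.half_lt_self h1p0 h1pt
      _ = 1 := add_tsub_cancel_of_le hp.le
  have hlt : sInf {r : ℝ≥0∞ | 0 < r ∧ ∃ z ∈ P, y = r • z} < p + δ := by
    refine lt_of_le_of_lt hyp ?_
    exact ENNReal.lt_add_right (hp.trans_le le_top).ne hδ0.ne'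
  obtain ⟨s, hsS, hs⟩ := sInf_lt_iff.mp hlt
  have hs1 : s < 1 := hs.trans hpδ1
  have h1 : (B - A) * (1 - s) ≤ q := core s hsS hs1
  have hBA1 : B - A ≤ 1 := tsub_le_self.trans hB1
  have hsplit : (1 : ℝ≥0∞) - p ≤ (1 - s) + δ := by
    rw [tsub_le_iff_right]
    calc (1 : ℝ≥0∞) = (1 - s) + s := (tsub_add_cancel_of_le hs1.le).symm
      _ ≤ (1 - s) + (p + δ) := add_le_add_right hs.le _
      _ = (1 - s) + δ + p := by ring
  calc (B - A) * (1 - p) ≤ (B - A) * ((1 - s) + δ) := mul_le_mul' le_rfl hsplit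
    _ = (B - A) * (1 - s) + (B - A) * δ := by ring
    _ ≤ q + 1 * δ := add_le_add h1 (mul_le_mul' hBA1 le_rfl)
    _ ≤ q + ↑ε := by rw [one_mul]; exact add_le_add_right (min_le_left _ _) q
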